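/- arXiv:2108.06369 — 2 statements merged into one kernel-verified Lean document; each statement's English description precedes it below -/
import Mathlib

section
/- Let R be a commutative Noetherian ring, let k, n be positive natural numbers, and let I₁, …, Iₙ be ideals of R. Then there exists a natural number M such that the intersection ⋂ᵢ Iᵢ^M is contained in (⋂ᵢ Iᵢ)^k. -/
private lemma iInf_fin_succ' {α : Type*} [CompleteLattice α] {n : ℕ} (f : Fin (n + 1) → α) :
    (⨅ i, f i) = f 0 ⊓ ⨅ i : Fin n, f i.succ := by
  apply le_antisymm
  · exact le_inf (iInf_le _ 0) (le_iInf fun i => iInf_le _ _)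
  · refine le_iInf fun i => ?_
    cases i using Fin.cases with
    | zero => exact inf_le_left
    | succ j => exact inf_le_right.trans (iInf_le _ j)

/-- Binary Artin–Rees consequence: `A^(c+k) ⊓ B ≤ A^k * B` for some `c`. -/
private lemma binary_AR {R : Type*} [CommRing R] [IsNoetherianRing R]
    (A B : Ideal R) (k : ℕ) : ∃ c : ℕ, A ^ (c + k) ⊓ B ≤ A ^ k * B := by
  obtain ⟨c, hc⟩ := Ideal.exists_pow_inf_eq_pow_smul A (M := R)
    (Submodule.restrictScalars R B)
  refine ⟨c, ?_⟩
  have h := hc (c + k) (Nat.le_add_right c k)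
  have hsub : c + k - c = k := by omega
  rw [hsub] at h
  intro x hx
  have hx' : x ∈ (A ^ (c + k) • (⊤ : Submodule R R) ⊓ Submodule.restrictScalars R B) := by
    constructor
    · rw [Ideal.smul_top_eq_map]
      simpa using hx.1
    · exact hx.2
  rw [h] at hx'
  have : A ^ k • (A ^ c • (⊤ : Submodule R R) ⊓ Submodule.restrictScalars R B) ≤
      A ^ k • Submodule.restrictScalars R B :=
    Submodule.smul_mono le_rfl inf_le_right
  have hx'' := this hx'
  rwa [show (A ^ k • Submodule.restrictScalars R B : Submodule R R) = A ^ k * B from Ideal.smul_eq_mul _ _] at hx''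

private lemma main_aux {R : Type*} [CommRing R] [IsNoetherianRing R] (k : ℕ) :
    ∀ (n : ℕ) (I : Fin n → Ideal R), ∃ M : ℕ, (⨅ i, (I i) ^ M) ≤ (⨅ i, I i) ^ k := by
  intro n
  induction n with
  | zero =>
    intro I
    exact ⟨0, by rw [iInf_of_empty (fun i => I i ^ 0), iInf_of_empty I, Ideal.top_pow]⟩
  | succ n ih =>
    intro I
    obtain ⟨M₁, hM₁⟩ := ih fun i => I i.succ
    set J : Ideal R := ⨅ i : Fin n, I i.succ with hJ
    obtain ⟨c, hc⟩ := binary_AR (I 0) (J ^ k) k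
    refine ⟨max M₁ (c + k), ?_⟩
    rw [iInf_fin_succ' I, iInf_fin_succ' fun i => I i ^ max M₁ (c + k)]
    have h1 : I 0 ^ max M₁ (c + k) ≤ I 0 ^ (c + k) :=
      Ideal.pow_le_pow_right (le_max_right _ _)
    have h2 : (⨅ i : Fin n, I i.succ ^ max M₁ (c + k)) ≤ J ^ k := by
      refine le_trans ?_ hM₁
      exact le_iInf fun i => (iInf_le _ i).trans (Ideal.pow_le_pow_right (le_max_left _ _))
    refine le_trans (inf_le_inf h1 h2) ?_
    refine hc.trans ?_
    calc I 0 ^ k * J ^ k = (I 0 * J) ^ k := (mul_pow _ _ _).symm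
      _ ≤ (I 0 ⊓ J) ^ k := Ideal.pow_right_mono (le_inf Ideal.mul_le_left Ideal.mul_le_right) _

/-- In a commutative Noetherian ring, for ideals `I 1, …, I n` and `k ≥ 1`
there exists `M` with `⋂ i, (I i)^M ⊆ (⋂ i, I i)^k`. -/
theorem stmt0 (R : Type*) [CommRing R] [IsNoetherianRing R]
    (n k : ℕ) (hn : 0 < n) (hk : 0 < k) (I : Fin n → Ideal R) :
    ∃ M : ℕ, (⨅ i, (I i) ^ M) ≤ (⨅ i, I i) ^ k :=
  main_aux k n I
end

section
/- Let R be a commutative Noetherian ring, let I and J be ideals of R, and let k be a natural number. Then there exists a natural number M such that I^M ∩ J^M ⊆ (I·J)^k ⊆ (I ∩ J)^k. -/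
/-- Two-ideal case via Artin–Rees: in a commutative Noetherian ring,
for ideals `I, J` and `k : ℕ` there is `M` with `I^M ⊓ J^M ⊆ (I*J)^k ⊆ (I ⊓ J)^k`. -/
theorem stmt1 (R : Type*) [CommRing R] [IsNoetherianRing R]
    (I J : Ideal R) (k : ℕ) :
    ∃ M : ℕ, I ^ M ⊓ J ^ M ≤ (I * J) ^ k ∧ (I * J) ^ k ≤ (I ⊓ J) ^ k := by
  obtain ⟨l, hl⟩ := Ideal.exists_pow_inf_eq_pow_smul I (J ^ k : Ideal R)
  refine ⟨l + k, ?_, pow_le_pow_left' (le_inf Ideal.mul_le_left Ideal.mul_le_right) k⟩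
  have h := hl (l + k) (by omega)
  simp only [smul_eq_mul, Ideal.mul_top, Nat.add_sub_cancel_left] at h
  calc I ^ (l + k) ⊓ J ^ (l + k)
      ≤ I ^ (l + k) ⊓ J ^ k :=
        inf_le_inf_left _ (Ideal.pow_le_pow_right (by omega))
    _ = I ^ k * (I ^ l ⊓ J ^ k) := h
    _ ≤ I ^ k * J ^ k := Ideal.mul_mono_right inf_le_right
    _ = (I * J) ^ k := (mul_pow I J k).symm
end
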